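/- Assume W > 0, 4I > zW, and r = 2k+1 is odd. Then over all pairs (a,b) with a, b ∈ {−r/2, −r/2+1, …, r/2}, the function φ(a,b) = (W/4)(a+b)² − (W/4 − I/z)(a² + b²) attains its minimum exactly at the two pairs (−1/2, 1/2) and (1/2, −1/2). -/
import Mathlib


open Finset

/-- The nearest-neighbour bond potential
`φ(a,b) = (W/4)(a+b)² − (W/4 − I/z)(a² + b²)`. -/
noncomputable def phi (z : ℕ) (I W : ℝ) (a b : ℝ) : ℝ :=
  W / 4 * (a + b) ^ 2 - (W / 4 - I / z) * (a ^ 2 + b ^ 2)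

/-- The finite set `{j − r/2 : j = 0, 1, …, r}` of possible values of `Q_x = n_x − r/2`. -/
noncomputable def chargeSet (r : ℕ) : Finset ℝ :=
  (Finset.range (r + 1)).image (fun (j : ℕ) => (j : ℝ) - r / 2)

lemma half_sq (r k : ℕ) (hrk : r = 2 * k + 1) (x : ℝ) (hx : x ∈ chargeSet r) :
    1 / 4 ≤ x ^ 2 ∧ (x ^ 2 = 1 / 4 ↔ x = 1 / 2 ∨ x = -(1 / 2)) := by
  obtain ⟨j, hj, rfl⟩ := Finset.mem_image.mp hx
  subst hrk
  set m : ℤ := 2 * (j : ℤ) - 2 * k - 1 with hmdef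
  have hm : ((j : ℝ) - (2 * k + 1 : ℕ) / 2) = (m : ℝ) / 2 := by
    push_cast [hmdef]; ring
  have hmo : m ≠ 0 := by omega
  have hm1 : (1 : ℤ) ≤ m ^ 2 := by
    rcases lt_or_gt_of_ne hmo with h | h <;> nlinarith
  have hm1' : (1 : ℝ) ≤ (m : ℝ) ^ 2 := by exact_mod_cast hm1
  rw [hm]
  constructor
  · nlinarith
  · constructor
    · intro h
      have h2 : ((m : ℝ) / 2 - 1 / 2) * ((m : ℝ) / 2 + 1 / 2) = 0 := by nlinarith
      rcases mul_eq_zero.mp h2 with h3 | h3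
      · left; linarith
      · right; linarith
    · rintro (h | h) <;> rw [h] <;> ring

/-- For `W > 0`, `4I > zW` and odd `r = 2k+1`, the minimum of `φ` over
`chargeSet r × chargeSet r` is attained exactly at `(−1/2, 1/2)` and `(1/2, −1/2)`. -/
theorem statement2 (r z k : ℕ) (hr : 2 ≤ r) (hz : 2 ≤ z) (I W : ℝ)
    (hW : 0 < W) (hIW : (z : ℝ) * W < 4 * I) (hrk : r = 2 * k + 1) :
    (-(1 / 2) : ℝ) ∈ chargeSet r ∧ ((1 / 2 : ℝ)) ∈ chargeSet r ∧
    ∀ a ∈ chargeSet r, ∀ b ∈ chargeSet r,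
      phi z I W (-(1 / 2)) (1 / 2) ≤ phi z I W a b ∧
      (phi z I W a b = phi z I W (-(1 / 2)) (1 / 2) ↔
        (a = -(1 / 2) ∧ b = 1 / 2) ∨ (a = 1 / 2 ∧ b = -(1 / 2))) := by
  have hz0 : (0 : ℝ) < (z : ℝ) := by positivity
  have hc : W / 4 < I / (z : ℝ) := by
    rw [div_lt_div_iff₀ (by norm_num) hz0]; nlinarith
  refine ⟨?_, ?_, ?_⟩
  · exact Finset.mem_image.mpr ⟨k, Finset.mem_range.mpr (by omega), by
      push_cast [hrk]; ring⟩
  · exact Finset.mem_image.mpr ⟨k + 1, Finset.mem_range.mpr (by omega), by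
      push_cast [hrk]; ring⟩
  · intro a ha b hb
    obtain ⟨ha1, ha2⟩ := half_sq r k hrk a ha
    obtain ⟨hb1, hb2⟩ := half_sq r k hrk b hb
    constructor
    · simp only [phi]
      nlinarith [sq_nonneg (a + b), mul_nonneg (le_of_lt (sub_pos.mpr hc)) (by linarith : (0:ℝ) ≤ a ^ 2 - 1/4), mul_nonneg (le_of_lt (sub_pos.mpr hc)) (by linarith : (0:ℝ) ≤ b ^ 2 - 1/4)]
    · constructor
      · intro h
        simp only [phi] at h
        have ha4 : a ^ 2 = 1 / 4 := by
          nlinarith [sq_nonneg (a + b), mul_nonneg (le_of_lt (sub_pos.mpr hc)) (by linarith : (0:ℝ) ≤ b ^ 2 - 1/4)]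
        have hb4 : b ^ 2 = 1 / 4 := by
          nlinarith [sq_nonneg (a + b), mul_nonneg (le_of_lt (sub_pos.mpr hc)) (by linarith : (0:ℝ) ≤ a ^ 2 - 1/4)]
        have hab : (a + b) ^ 2 = 0 := by nlinarith
        have hab0 : a + b = 0 := by
          have := sq_eq_zero_iff.mp hab; exact this
        rcases ha2.mp ha4 with h1 | h1
        · right; exact ⟨h1, by rw [h1] at hab0; linarith⟩
        · left; exact ⟨h1, by rw [h1] at hab0; linarith⟩
      · rintro (⟨h1, h2⟩ | ⟨h1, h2⟩) <;> subst h1 <;> subst h2 <;> simp [phi] <;> ring
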